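/- For q = 54 = 2·3^3, for every integer a with 1 ≤ a < 54 and gcd(a, 54) = 1, every finite simple continued fraction expansion a/54 = [a_1, …, a_r] (each a_i a positive integer) has some partial quotient a_i ≥ 5. In particular, the bound 5 in the statement 'for q = 2^n·3^m there exists a coprime a with all partial quotients of a/q at most 5' is optimal. -/

import Mathlib

set_option maxHeartbeats 2000000

/-- The value of the finite simple continued fraction `1/(a₁ + 1/(a₂ + ⋯ + 1/aᵣ))`. -/
def cfVal : List ℕ → ℚ
  | [] => 0
  | a :: l => 1 / (a + cfVal l)

/-- The closure of the set of reduced fractions `a/54` under `x ↦ 1/x - k`, `k ≤ 4`. -/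
def zB : List ℚ := [(1:ℚ)/54, (1:ℚ)/53, (5:ℚ)/54, (1:ℚ)/10, (5:ℚ)/49, (7:ℚ)/54,
  (1:ℚ)/7, (7:ℚ)/47, (2:ℚ)/13, (4:ℚ)/25, (3:ℚ)/17, (3:ℚ)/16, (11:ℚ)/54, (13:ℚ)/54,
  (11:ℚ)/43, (17:ℚ)/54, (13:ℚ)/41, (8:ℚ)/23, (19:ℚ)/54, (23:ℚ)/54, (17:ℚ)/37,
  (25:ℚ)/54, (29:ℚ)/54, (19:ℚ)/35, (31:ℚ)/54, (35:ℚ)/54, (37:ℚ)/54, (23:ℚ)/31,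
  (41:ℚ)/54, (43:ℚ)/54, (16:ℚ)/19, (25:ℚ)/29, (47:ℚ)/54, (7:ℚ)/8, (49:ℚ)/54,
  (10:ℚ)/11, (53:ℚ)/54]

lemma zB_closed : ∀ x ∈ zB, ∀ k ∈ [(1:ℚ),2,3,4],
    0 ≤ 1/x - k → 1/x - k ≤ 1 → (1/x - k) ∈ zB := by
  intro x hx k hk
  simp only [zB, List.mem_cons, List.not_mem_nil, or_false] at hx
  simp only [List.mem_cons, List.not_mem_nil, or_false] at hk
  rcases hx with rfl|rfl|rfl|rfl|rfl|rfl|rfl|rfl|rfl|rfl|rfl|rfl|rfl|rfl|rfl|rfl|rfl|rfl|rfl|rfl|rfl|rfl|rfl|rfl|rfl|rfl|rfl|rfl|rfl|rfl|rfl|rfl|rfl|rfl|rfl|rfl|rfl <;>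
    rcases hk with rfl|rfl|rfl|rfl <;> norm_num [zB]

lemma zB_zero : (0:ℚ) ∉ zB := by norm_num [zB]

lemma zB_pos : ∀ x ∈ zB, 0 < x := by
  intro x hx
  simp only [zB, List.mem_cons, List.not_mem_nil, or_false] at hx
  rcases hx with rfl|rfl|rfl|rfl|rfl|rfl|rfl|rfl|rfl|rfl|rfl|rfl|rfl|rfl|rfl|rfl|rfl|rfl|rfl|rfl|rfl|rfl|rfl|rfl|rfl|rfl|rfl|rfl|rfl|rfl|rfl|rfl|rfl|rfl|rfl|rfl|rfl <;> norm_num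

lemma cfVal_main : ∀ L : List ℕ, (∀ x ∈ L, 0 < x) → (∀ x ∈ L, x < 5) →
    0 ≤ cfVal L ∧ cfVal L ≤ 1 ∧ cfVal L ∉ zB := by
  intro L
  induction L with
  | nil =>
    intro _ _
    refine ⟨le_refl 0, by norm_num [cfVal], by simpa [cfVal] using zB_zero⟩
  | cons a tail ih =>
    intro hpos hlt
    obtain ⟨hy0, hy1, hyB⟩ := ih (fun x hx => hpos x (List.mem_cons_of_mem a hx))
      (fun x hx => hlt x (List.mem_cons_of_mem a hx))
    have ha1 : 1 ≤ a := hpos a List.mem_cons_self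
    have ha5 : a < 5 := hlt a List.mem_cons_self
    set y := cfVal tail with hy
    have haq : (1:ℚ) ≤ (a:ℚ) := by exact_mod_cast ha1
    have hden : (0:ℚ) < (a:ℚ) + y := by linarith
    have hx0 : 0 ≤ cfVal (a :: tail) := by
      simp only [cfVal]
      positivity
    have hx1 : cfVal (a :: tail) ≤ 1 := by
      simp only [cfVal, ← hy]
      rw [div_le_one hden]
      linarith
    refine ⟨hx0, hx1, ?_⟩
    intro hmem
    set x := cfVal (a :: tail) with hxdef
    have hxval : x = 1 / ((a:ℚ) + y) := by simp [hxdef, cfVal, hy]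
    have hxpos : 0 < x := zB_pos x hmem
    have hinv : 1/x = (a:ℚ) + y := by
      rw [hxval]; field_simp
    have hk : (a:ℚ) ∈ [(1:ℚ),2,3,4] := by
      interval_cases a <;> simp
    have := zB_closed x hmem (a:ℚ) hk (by rw [hinv]; linarith) (by rw [hinv]; linarith)
    rw [hinv] at this
    have : y ∈ zB := by simpa using this
    exact hyB this

/-- For `q = 54 = 2 · 3³`, every continued fraction expansion of every reduced
fraction `a/54` has some partial quotient at least `5`; so the constant `5`
for `q = 2^n 3^m` is optimal. -/
theorem zaremba_fiftyfour_optimal (a : ℕ) (ha : 1 ≤ a) (ha' : a < 54)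
    (hgcd : Nat.gcd a 54 = 1) (L : List ℕ) (hL : ∀ x ∈ L, 0 < x)
    (h : (a : ℚ) / 54 = cfVal L) :
    ∃ x ∈ L, 5 ≤ x := by
  by_contra hc
  push_neg at hc
  have hmain := cfVal_main L hL hc
  have hmem : (a : ℚ) / 54 ∈ zB := by
    interval_cases a <;> first
      | (exfalso; revert hgcd; decide)
      | (norm_num [zB])
  rw [h] at hmem
  exact hmain.2.2 hmem
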